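/- Let α ∈ A^+ be self-overlap free. Then every word u ∈ A*αA* factors uniquely as u = u' u† u'' where u', u'' ∈ A* − A*αA* (i.e., neither contains α as a factor) and u† ∈ αA* ∩ A*α. -/

import Mathlib

def SelfOverlapFree {A : Type*} (w : List A) : Prop :=
  ∀ p : List A, p ≠ [] → p.length < w.length → p <+: w → ¬ p <:+ w

def IsFactor {A : Type*} (α w : List A) : Prop :=
  ∃ x y : List A, w = x ++ α ++ y

/-- Two occurrences of a self-overlap free word that overlap must coincide. -/
lemma overlap_eq {A : Type*} {α : List A} (hsof : SelfOverlapFree α)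
    {u x y x' y' : List A} (h1 : u = x ++ α ++ y) (h2 : u = x' ++ α ++ y')
    (hle : x.length ≤ x'.length) (hlt : x'.length < x.length + α.length) :
    x.length = x'.length := by
  by_contra hne
  have hd : 0 < x'.length - x.length := by omega
  set d := x'.length - x.length with hdd
  have hdL : d < α.length := by omega
  have e1 : u.drop x.length = α ++ y := by
    rw [h1, List.append_assoc, List.drop_left]
  have e2 : u.drop x'.length = α ++ y' := by
    rw [h2, List.append_assoc, List.drop_left]
  have e3 : u.drop x'.length = (u.drop x.length).drop d := by
    rw [List.drop_drop]
    congr 1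
    omega
  have e4 : α ++ y' = α.drop d ++ y := by
    rw [← e2, e3, e1, List.drop_append_of_le_length (le_of_lt hdL)]
  have hpre : α.drop d <+: α :=
    List.prefix_of_prefix_length_le ⟨y, e4.symm⟩ ⟨y', rfl⟩ (by simp)
  have hplen : (α.drop d).length = α.length - d := List.length_drop
  exact hsof (α.drop d)
    (by intro h; rw [h] at hplen; simp at hplen; omega)
    (by omega) hpre (List.drop_suffix _ _)

lemma factor_of_prefix {A : Type*} {α u z w a : List A}
    (h : u = z ++ α ++ w) (ha : a <+: u) (hlen : z.length + α.length ≤ a.length) :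
    IsFactor α a := by
  have h1 : z ++ α <+: u := ⟨w, by rw [h]⟩
  have h2 : z ++ α <+: a :=
    List.prefix_of_prefix_length_le h1 ha (by simpa using hlen)
  obtain ⟨t, ht⟩ := h2
  exact ⟨z, t, by rw [← ht]⟩

lemma factor_of_suffix {A : Type*} {α u z w b : List A}
    (h : u = z ++ α ++ w) (hb : b <:+ u) (hlen : α.length + w.length ≤ b.length) :
    IsFactor α b := by
  have h1 : α ++ w <:+ u := ⟨z, by rw [h, List.append_assoc]⟩
  have h2 : α ++ w <:+ b :=
    List.suffix_of_suffix_length_le h1 hb (by simpa using hlen)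
  obtain ⟨t, ht⟩ := h2
  exact ⟨t, w, by rw [← ht, List.append_assoc]⟩

/-- Canonical form: every word containing the self-overlap free word `α` as a
factor factors uniquely as `u = u' u† u''` with `u', u''` not containing `α`
and `u†` beginning and ending with `α`. -/
theorem canonical_form {A : Type*} (α : List A) (hne : α ≠ [])
    (hsof : SelfOverlapFree α) (u : List A) (hu : IsFactor α u) :
    ∃! t : List A × List A × List A,
      ¬ IsFactor α t.1 ∧ ¬ IsFactor α t.2.2 ∧
      α <+: t.2.1 ∧ α <:+ t.2.1 ∧ u = t.1 ++ t.2.1 ++ t.2.2 := by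
  classical
  have hαpos : 0 < α.length := List.length_pos_iff.2 hne
  -- existence
  set P : ℕ → Prop := fun n => ∃ z w, u = z ++ α ++ w ∧ z.length = n with hP
  have hPdec : DecidablePred P := Classical.decPred P
  have hPex : ∃ n, P n := by obtain ⟨z, w, h⟩ := hu; exact ⟨z.length, z, w, h, rfl⟩
  set Q : ℕ → Prop := fun n => ∃ z w, u = z ++ α ++ w ∧ w.length = n with hQ
  have hQdec : DecidablePred Q := Classical.decPred Q
  have hQex : ∃ n, Q n := by obtain ⟨z, w, h⟩ := hu; exact ⟨w.length, z, w, h, rfl⟩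
  obtain ⟨z₁, w₁, h₁, hz₁len⟩ := Nat.find_spec hPex
  obtain ⟨z₂, w₂, h₂, hw₂len⟩ := Nat.find_spec hQex
  have hz₁ : ¬ IsFactor α z₁ := by
    rintro ⟨p, q, hpq⟩
    have hP' : P p.length := ⟨p, q ++ α ++ w₁, by
      rw [h₁, hpq]; simp [List.append_assoc], rfl⟩
    have hlt : p.length < Nat.find hPex := by
      have := congrArg List.length hpq
      simp at this
      omega
    exact Nat.find_min hPex hlt hP'
  have hw₂ : ¬ IsFactor α w₂ := by
    rintro ⟨p, q, hpq⟩
    have hQ' : Q q.length := ⟨z₂ ++ α ++ p, q, by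
      rw [h₂, hpq]; simp [List.append_assoc], rfl⟩
    have hlt : q.length < Nat.find hQex := by
      have := congrArg List.length hpq
      simp at this
      omega
    exact Nat.find_min hQex hlt hQ'
  have hle : z₁.length ≤ z₂.length := by
    rw [hz₁len]
    exact Nat.find_min' hPex ⟨z₂, w₂, h₂, rfl⟩
  have hp1 : z₁ <+: u := ⟨α ++ w₁, by rw [h₁, List.append_assoc]⟩
  have hp2 : z₂ <+: u := ⟨α ++ w₂, by rw [h₂, List.append_assoc]⟩
  have hz₁z₂ : z₁ <+: z₂ := List.prefix_of_prefix_length_le hp1 hp2 hle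
  obtain ⟨d, hdz⟩ := hz₁z₂
  have humid : u = z₁ ++ (d ++ α) ++ w₂ := by
    rw [h₂, ← hdz]; simp [List.append_assoc]
  have hmw : (d ++ α) ++ w₂ = α ++ w₁ := by
    have hh := h₁.symm.trans humid
    rw [List.append_assoc, List.append_assoc] at hh
    exact (List.append_cancel_left hh).symm
  have hαpre : α <+: d ++ α :=
    List.prefix_of_prefix_length_le ⟨w₁, rfl⟩ ⟨w₂, hmw⟩ (by simp)
  refine ⟨(z₁, d ++ α, w₂), ⟨hz₁, hw₂, hαpre, List.suffix_append d α, humid⟩, ?_⟩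
  -- uniqueness
  rintro ⟨a, m, b⟩ ⟨ha, hb, hm1, hm2, hueq⟩
  simp only at ha hb hm1 hm2 hueq
  -- general uniqueness of the triple
  have key : ∀ (a m b a' m' b' : List A),
      ¬ IsFactor α a → ¬ IsFactor α b → α <+: m → α <:+ m →
      u = a ++ m ++ b →
      ¬ IsFactor α a' → ¬ IsFactor α b' → α <+: m' → α <:+ m' →
      u = a' ++ m' ++ b' → a = a' ∧ m = m' ∧ b = b' := by
    intro a m b a' m' b' ha hb hm1 hm2 hueq ha' hb' hm1' hm2' hueq'
    obtain ⟨r, hr⟩ := hm1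
    obtain ⟨r', hr'⟩ := hm1'
    obtain ⟨s, hs⟩ := hm2
    obtain ⟨s', hs'⟩ := hm2'
    have hu1 : u = a ++ α ++ (r ++ b) := by rw [hueq, ← hr]; simp [List.append_assoc]
    have hu1' : u = a' ++ α ++ (r' ++ b') := by rw [hueq', ← hr']; simp [List.append_assoc]
    have hu2 : u = (a ++ s) ++ α ++ b := by rw [hueq, ← hs]; simp [List.append_assoc]
    have hu2' : u = (a' ++ s') ++ α ++ b' := by rw [hueq', ← hs']; simp [List.append_assoc]
    -- a = a'
    have hapre : a <+: u := ⟨m ++ b, by rw [hueq]; simp [List.append_assoc]⟩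
    have hapre' : a' <+: u := ⟨m' ++ b', by rw [hueq']; simp [List.append_assoc]⟩
    have halen : a.length = a'.length := by
      rcases le_total a.length a'.length with h | h
      · by_contra hner
        have : a.length + α.length ≤ a'.length ∨ a'.length < a.length + α.length := by omega
        rcases this with hc | hc
        · exact ha' (factor_of_prefix hu1 hapre' hc)
        · exact hner (overlap_eq hsof hu1 hu1' h hc)
      · by_contra hner
        have : a'.length + α.length ≤ a.length ∨ a.length < a'.length + α.length := by omega
        rcases this with hc | hc
        · exact ha (factor_of_prefix hu1' hapre hc)
        · exact hner ((overlap_eq hsof hu1' hu1 h hc).symm)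
    have haa : a = a' :=
      (List.prefix_of_prefix_length_le hapre hapre' (le_of_eq halen)).eq_of_length halen
    -- b = b'
    have hbsuf : b <:+ u := ⟨a ++ m, by rw [hueq]⟩
    have hbsuf' : b' <:+ u := ⟨a' ++ m', by rw [hueq']⟩
    have hlenu : u.length = a.length + s.length + α.length + b.length := by
      have := congrArg List.length hu2; simp at this; omega
    have hlenu' : u.length = a'.length + s'.length + α.length + b'.length := by
      have := congrArg List.length hu2'; simp at this; omega
    have hblen : b.length = b'.length := by
      rcases le_total b.length b'.length with h | h
      · by_contra hner
        have : b.length + α.length ≤ b'.length ∨ b'.length < b.length + α.length := by omega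
        rcases this with hc | hc
        · exact hb' (factor_of_suffix hu2 hbsuf' (by omega))
        · have := overlap_eq hsof hu2' hu2 (by simp; omega) (by simp; omega)
          simp at this; omega
      · by_contra hner
        have : b'.length + α.length ≤ b.length ∨ b.length < b'.length + α.length := by omega
        rcases this with hc | hc
        · exact hb (factor_of_suffix hu2' hbsuf (by omega))
        · have := overlap_eq hsof hu2 hu2' (by simp; omega) (by simp; omega)
          simp at this; omega
    have hbb : b = b' :=
      (List.suffix_of_suffix_length_le hbsuf hbsuf' (le_of_eq hblen)).eq_of_length hblen
    refine ⟨haa, ?_, hbb⟩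
    have : a ++ (m ++ b) = a ++ (m' ++ b) := by
      rw [← List.append_assoc, ← hueq, hueq', haa, hbb, List.append_assoc]
    exact List.append_cancel_right (List.append_cancel_left this)
  obtain ⟨e1, e2, e3⟩ := key a m b z₁ (d ++ α) w₂ ha hb hm1 hm2 hueq
    hz₁ hw₂ hαpre (List.suffix_append d α) humid
  simp [e1, e2, e3]
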